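/- Suppose P₁ ∈ G_{Δ₂,Δ₁}, P₂ ∈ G_{Δ₃,Δ₂}, …, P_t ∈ G_{Δ_{t+1},Δ_t} are r×r row-stochastic matrices, where Δ_{t+1} = (⟨r⟩) is the trivial partition and Δ₁ = ({j},K^c)_{j∈K} for some nonempty K ⊆ ⟨r⟩. Then (P_t P_{t-1}⋯P₁)^K is a stable matrix and every row of it equals (P_t^{-+}P_{t-1}^{-+}⋯P₁^{-+})^{∪_{j∈K}{{j}}}, the restriction of the single-row grouped product to the singleton-labeled columns. -/

import Mathlib

/-- Backwards product `M (t-1) * ⋯ * M 1 * M 0` of a chain of composable real matrices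
(`M b` maps — acting on row vectors on the right — from index `b.succ` to `b.castSucc`). -/
noncomputable def revChainProd : ∀ (t : ℕ) (τ : Fin (t + 1) → Type) [∀ i, Fintype (τ i)]
    [∀ i, DecidableEq (τ i)]
    (_ : ∀ b : Fin t, Matrix (τ b.succ) (τ b.castSucc) ℝ),
    Matrix (τ (Fin.last t)) (τ 0) ℝ
  | 0, τ, _, _, _ => (1 : Matrix (τ 0) (τ 0) ℝ)
  | (t + 1), τ, _, _, M =>
      revChainProd t (fun i => τ i.succ) (fun b => M b.succ) * M 0

/-- `P` is `[Δ]`-stable on `Sg` (real version). -/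
def IsStableOn {m n : ℕ} (P : Matrix (Fin m) (Fin n) ℝ)
    (Δ : Finpartition (Finset.univ : Finset (Fin m)))
    (Sg : Finpartition (Finset.univ : Finset (Fin n))) : Prop :=
  ∀ K ∈ Δ.parts, ∀ L ∈ Sg.parts, ∀ i ∈ K, ∀ i' ∈ K,
    ∑ j ∈ L, P i j = ∑ j ∈ L, P i' j

lemma degroot_key (r : ℕ) : ∀ (t : ℕ)
    (Δ : Fin (t + 1) → Finpartition (Finset.univ : Finset (Fin r)))
    (P : Fin t → Matrix (Fin r) (Fin r) ℝ)
    (g : ∀ b : Fin t, Matrix ↥(Δ b.succ).parts ↥(Δ b.castSucc).parts ℝ)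
    (_ : ∀ (b : Fin t) (Kp : ↥(Δ b.succ).parts) (L : ↥(Δ b.castSucc).parts),
      ∀ i ∈ (Kp : Finset (Fin r)), ∑ j ∈ (L : Finset (Fin r)), P b i j = g b Kp L)
    (K' : Finset (Fin r)) (hK' : K' ∈ (Δ (Fin.last t)).parts)
    (i : Fin r) (_ : i ∈ K')
    (L : Finset (Fin r)) (hL : L ∈ (Δ 0).parts),
    ∑ j ∈ L, revChainProd t (fun _ => Fin r) P i j =
      revChainProd t (fun i => ↥(Δ i).parts) g ⟨K', hK'⟩ ⟨L, hL⟩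
  | 0, Δ, P, g, hg, K', hK', i, hi, L, hL => by
      have hK'0 : K' ∈ (Δ 0).parts := hK'
      simp only [revChainProd, Matrix.one_apply, Finset.sum_ite_eq]
      by_cases h : i ∈ L
      · rw [if_pos h, if_pos (Subtype.ext ((Δ 0).eq_of_mem_parts hK'0 hL hi h))]
      · rw [if_neg h, if_neg]
        intro he
        exact h ((Subtype.mk.injEq _ _ _ _ ▸ he : K' = L) ▸ hi)
  | (t + 1), Δ, P, g, hg, K', hK', i, hi, L, hL => by
      have IH := degroot_key r t (fun b => Δ b.succ) (fun b => P b.succ) (fun b => g b.succ)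
        (fun b => hg b.succ) K' hK' i hi
      set Q := revChainProd t (fun _ => Fin r) (fun b => P b.succ) with hQ
      set s := (Δ ((0 : Fin (t+1)).succ)).parts with hs
      have huniv : (Finset.univ : Finset (Fin r)) = s.biUnion id :=
        ((Δ ((0 : Fin (t+1)).succ)).sup_parts).symm.trans (Finset.sup_eq_biUnion _ id)
      calc ∑ j ∈ L, revChainProd (t+1) (fun _ => Fin r) P i j
          = ∑ j ∈ L, ∑ k, Q i k * P 0 k j := by
            simp only [revChainProd, Matrix.mul_apply, hQ]
        _ = ∑ k, Q i k * ∑ j ∈ L, P 0 k j := by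
            rw [Finset.sum_comm]; simp_rw [Finset.mul_sum]
        _ = ∑ M ∈ s, ∑ k ∈ M, Q i k * ∑ j ∈ L, P 0 k j := by
            rw [huniv, Finset.sum_biUnion ((Δ ((0 : Fin (t+1)).succ)).supIndep.pairwiseDisjoint)]
            rfl
        _ = ∑ M ∈ s.attach, ∑ k ∈ (M : Finset (Fin r)), Q i k * ∑ j ∈ L, P 0 k j := by
            exact (Finset.sum_attach s _).symm
        _ = ∑ M ∈ s.attach,
              (revChainProd t (fun i => ↥(Δ i.succ).parts) (fun b => g b.succ) ⟨K', hK'⟩ M)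
                * g 0 M ⟨L, hL⟩ := by
            refine Finset.sum_congr rfl fun M _ => ?_
            have h1 : ∀ k ∈ (M : Finset (Fin r)), Q i k * ∑ j ∈ L, P 0 k j
                = Q i k * g 0 M ⟨L, hL⟩ := fun k hk => by
              rw [hg 0 M ⟨L, hL⟩ k hk]
            rw [Finset.sum_congr rfl h1, ← Finset.sum_mul, IH (M : Finset (Fin r)) M.2]
        _ = revChainProd (t+1) (fun i => ↥(Δ i).parts) g ⟨K', hK'⟩ ⟨L, hL⟩ := by
            simp only [revChainProd]
            exact (Finset.sum_congr (Finset.univ_eq_attach _) (fun _ _ => rfl)).symm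

/-- if the row-stochastic matrices `P_b ∈ G_{Δ_{b+1},Δ_b}` (`b = 1,…,t`),
`Δ_{t+1} = (⟨r⟩)` is trivial and `Δ₁ = ({j},Kᶜ)_{j∈K}`, then `(P_t⋯P₁)^K` is stable and
each of its rows equals the restriction of the single-row grouped product
`P_t^{-+}⋯P₁^{-+}` to the singleton-labeled columns. -/
theorem degroot_grouped_partial_consensus (r : ℕ) (hr : 2 ≤ r) (t : ℕ) (ht : 1 ≤ t)
    (Δ : Fin (t + 1) → Finpartition (Finset.univ : Finset (Fin r)))
    (P : Fin t → Matrix (Fin r) (Fin r) ℝ)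
    (hnonneg : ∀ b, ∀ i j, 0 ≤ P b i j)
    (hrowsum : ∀ b, ∀ i, ∑ j, P b i j = 1)
    (hstab : ∀ b : Fin t, IsStableOn (P b) (Δ b.succ) (Δ b.castSucc))
    (g : ∀ b : Fin t, Matrix ↥(Δ b.succ).parts ↥(Δ b.castSucc).parts ℝ)
    (hg : ∀ (b : Fin t) (Kp : ↥(Δ b.succ).parts) (L : ↥(Δ b.castSucc).parts),
      ∀ i ∈ (Kp : Finset (Fin r)), ∑ j ∈ (L : Finset (Fin r)), P b i j = g b Kp L)
    (hΔtop : (Δ (Fin.last t)).parts = {Finset.univ})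
    (K : Finset (Fin r)) (hK : K.Nonempty)
    (hΔ₁ : (Δ 0).parts =
      (K.image fun j => ({j} : Finset (Fin r))) ∪ (if Kᶜ = ∅ then ∅ else {Kᶜ})) :
    (∀ j ∈ K, ∀ i i' : Fin r,
      revChainProd t (fun _ => Fin r) P i j = revChainProd t (fun _ => Fin r) P i' j) ∧
    (∀ j ∈ K, ∀ i : Fin r,
      ∀ (hU : Finset.univ ∈ (Δ (Fin.last t)).parts) (hj : {j} ∈ (Δ 0).parts),
        revChainProd t (fun _ => Fin r) P i j =
        revChainProd t (fun i => ↥(Δ i).parts) g ⟨Finset.univ, hU⟩ ⟨{j}, hj⟩) := by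
  have main : ∀ j ∈ K, ∀ i : Fin r,
      ∀ (hU : Finset.univ ∈ (Δ (Fin.last t)).parts) (hj : {j} ∈ (Δ 0).parts),
        revChainProd t (fun _ => Fin r) P i j =
        revChainProd t (fun i => ↥(Δ i).parts) g ⟨Finset.univ, hU⟩ ⟨{j}, hj⟩ := by
    intro j hj i hU hjp
    have := degroot_key r t Δ P g hg Finset.univ hU i (Finset.mem_univ i) {j} hjp
    rwa [Finset.sum_singleton] at this
  have hU : Finset.univ ∈ (Δ (Fin.last t)).parts := by
    rw [hΔtop]; exact Finset.mem_singleton_self _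
  refine ⟨fun j hj i i' => ?_, main⟩
  have hjp : ({j} : Finset (Fin r)) ∈ (Δ 0).parts := by
    rw [hΔ₁]
    exact Finset.mem_union_left _ (Finset.mem_image_of_mem _ hj)
  rw [main j hj i hU hjp, main j hj i' hU hjp]
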